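/- Let M be a monoid and A an M-semimodule. The map θ(M,A): H²(M,A) → E(M,A) sending the cohomology class of a 2-cocycle f to the similarity class of the extension E_f is a well-defined surjective map of pointed sets. If moreover A is cancellative, then θ(M,A) is a bijection. -/

import Mathlib

universe u v

section SchreierSemimodule

/- Throughout, `M` is a (multiplicatively written) monoid and an `M`-semimodule is an
additively written abelian monoid `A` together with a `DistribMulAction` of `M` on `A`,
i.e. an action satisfying `x • (a + a') = x • a + x • a'`, `x • 0 = 0`,
`(x * y) • a = x • (y • a)` and `1 • a = a`. -/

variable (M : Type u) (A : Type v) [Monoid M] [AddCommMonoid A] [DistribMulAction M A]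

/-- `u` is a representative over `x ∈ M` for the sequence `A →^κ B →^σ M`:
`σ u = x` and every `b ∈ σ⁻¹(x)` can be written uniquely as `b = κ a + u`. -/
def IsRepOf {B : Type*} [AddMonoid B] (κ : A →+ B) (σ : B → M) (x : M) (u : B) : Prop :=
  σ u = x ∧ ∀ b : B, σ b = x → ∃! a : A, b = κ a + u

/-- A Schreier extension of the `M`-semimodule `A` by the monoid `M`:  a sequence
`A →^κ B →^σ M` of monoids (`σ` being a homomorphism from the additively written
monoid `B` to the multiplicatively written monoid `M`) such that `κ` is injective,
`σ` is surjective, `κ(A) = σ⁻¹(1)`, every `x ∈ M` admits a representative, and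
moreover `b + κ a = κ (σ b • a) + b` for all `a ∈ A`, `b ∈ B`. -/
structure SchreierExtension where
  /-- the middle monoid of the extension -/
  B : Type (max u v)
  [instB : AddMonoid B]
  κ : A →+ B
  σ : B → M
  sigma_zero : σ 0 = 1
  sigma_add : ∀ b₁ b₂ : B, σ (b₁ + b₂) = σ b₁ * σ b₂
  kappa_inj : Function.Injective κ
  sigma_surj : Function.Surjective σ
  range_eq : ∀ b : B, σ b = 1 ↔ b ∈ Set.range κ
  rep_exists : ∀ x : M, ∃ u : B, IsRepOf M A κ σ x u
  compat : ∀ (a : A) (b : B), b + κ a = κ (σ b • a) + b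

attribute [instance] SchreierExtension.instB

variable {M A}

/-- `u` is a representative of the Schreier extension `E` over `x`. -/
def SchreierExtension.IsRep (E : SchreierExtension M A) (x : M) (u : E.B) : Prop :=
  IsRepOf M A E.κ E.σ x u

variable {A' : Type v} [AddCommMonoid A'] [DistribMulAction M A']

/-- `(α, β, 1_M)` is a morphism of Schreier extensions from `E` to `E'`:  the two squares
commute and `β` carries representatives to representatives. -/
def IsSchreierHom (E : SchreierExtension M A) (E' : SchreierExtension M A')
    (α : A →+ A') (β : E.B →+ E'.B) : Prop :=
  (∀ a : A, β (E.κ a) = E'.κ (α a)) ∧ (∀ b : E.B, E'.σ (β b) = E.σ b) ∧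
    ∀ (x : M) (u : E.B), E.IsRep x u → E'.IsRep x (β u)

/-- Two Schreier extensions of the `M`-semimodule `A` by `M` are congruent if there is a
monoid homomorphism between the middle monoids which commutes with the inclusions and the
projections and carries representatives to representatives, i.e. a morphism of the form
`(1_A, β, 1_M)`. -/
def SchreierCongruent (E E' : SchreierExtension M A) : Prop :=
  ∃ β : E.B →+ E'.B, IsSchreierHom E E' (AddMonoidHom.id A) β

end SchreierSemimodule


section Cocycles

variable (M : Type u) (A : Type v) [Monoid M] [AddCommMonoid A] [DistribMulAction M A]

/-- A (normalized) `2`-cocycle of the monoid `M` with coefficients in the `M`-semimodule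
`A`: `f (x, 1) = 0 = f (1, y)` and `x • f (y, z) + f (x, y*z) = f (x*y, z) + f (x, y)`. -/
def IsCocycle (f : M → M → A) : Prop :=
  (∀ x : M, f x 1 = 0) ∧ (∀ y : M, f 1 y = 0) ∧
    ∀ x y z : M, x • f y z + f x (y * z) = f (x * y) z + f x y

/-- The type of (normalized) `2`-cocycles of `M` with coefficients in `A`. -/
def Cocycle : Type (max u v) := {f : M → M → A // IsCocycle M A f}

/-- The zero `2`-cocycle. -/
def zeroCocycle : Cocycle M A :=
  ⟨fun _ _ => (0 : A), fun _ => rfl, fun _ => rfl, by intro x y z; simp⟩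

/-- Two `2`-cocycles `f, f'` are strongly cohomologous if there is a function
`g : M → U(A)` into the group of invertible elements of `A` with `g 1 = 0` and
`f (x, y) = f' (x, y) + x • g y − g (x*y) + g x` for all `x, y ∈ M`. -/
def StronglyCohomologous (f f' : M → M → A) : Prop :=
  ∃ g : M → AddUnits A, g 1 = 0 ∧
    ∀ x y : M, f x y = f' x y + x • (g y : A) + ((-(g (x * y)) : AddUnits A) : A) + (g x : A)

/-- Two `2`-cocycles `f, f'` are cohomologous if there are functions `g₁, g₂ : M → A` with
`g₁ 1 = 0 = g₂ 1` and
`f (x,y) + x • g₁ y + g₁ x + g₂ (x*y) = f' (x,y) + x • g₂ y + g₂ x + g₁ (x*y)`. -/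
def Cohomologous (f f' : M → M → A) : Prop :=
  ∃ g₁ g₂ : M → A, g₁ 1 = 0 ∧ g₂ 1 = 0 ∧
    ∀ x y : M, f x y + x • g₁ y + g₁ x + g₂ (x * y)
      = f' x y + x • g₂ y + g₂ x + g₁ (x * y)

variable {M A}

/-- The underlying set `B_f = A × M` of the Schreier extension `E_f` associated with a
`2`-cocycle `f`. -/
@[ext] structure Bf (f : Cocycle M A) where
  a : A
  x : M

namespace Bf

variable (f : Cocycle M A)

/-- The composition `(a₁, x) + (a₂, y) = (a₁ + x • a₂ + f (x, y), x * y)` on `B_f`. -/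
protected def add (p q : Bf f) : Bf f := ⟨p.a + p.x • q.a + f.1 p.x q.x, p.x * q.x⟩

instance : Zero (Bf f) := ⟨⟨0, 1⟩⟩
instance : Add (Bf f) := ⟨Bf.add f⟩

instance : AddMonoid (Bf f) where
  nsmul := nsmulRec
  add_assoc p q r := by
    show (Bf.add f (Bf.add f p q) r) = Bf.add f p (Bf.add f q r)
    unfold Bf.add
    have h := f.2.2.2 p.x q.x r.x
    simp only [Bf.mk.injEq]
    refine ⟨?_, mul_assoc _ _ _⟩
    calc p.a + p.x • q.a + f.1 p.x q.x + (p.x * q.x) • r.a + f.1 (p.x * q.x) r.x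
        = p.a + p.x • q.a + p.x • (q.x • r.a) + (f.1 (p.x * q.x) r.x + f.1 p.x q.x) := by
          rw [mul_smul]; abel
      _ = p.a + p.x • q.a + p.x • (q.x • r.a) + (p.x • f.1 q.x r.x + f.1 p.x (q.x * r.x)) := by
          rw [h]
      _ = p.a + p.x • (q.a + q.x • r.a + f.1 q.x r.x) + f.1 p.x (q.x * r.x) := by
          rw [smul_add, smul_add]; abel
  zero_add p := by
    show Bf.add f ⟨0, 1⟩ p = p
    unfold Bf.add
    cases p with
    | mk a x => simp [f.2.2.1 x]
  add_zero p := by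
    show Bf.add f p ⟨0, 1⟩ = p
    unfold Bf.add
    cases p with
    | mk a x => simp [f.2.1 x]

theorem add_def (p q : Bf f) : p + q = ⟨p.a + p.x • q.a + f.1 p.x q.x, p.x * q.x⟩ := rfl

theorem zero_def : (0 : Bf f) = ⟨0, 1⟩ := rfl

end Bf

/-- The inclusion `κ_f : A → B_f`, `a ↦ (a, 1)`. -/
def kappaF (f : Cocycle M A) : A →+ Bf f where
  toFun a := ⟨a, 1⟩
  map_zero' := rfl
  map_add' a b := by
    rw [Bf.add_def]
    simp [f.2.2.1]

/-- The projection `σ_f : B_f → M`, `(a, x) ↦ x`. -/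
def sigmaF (f : Cocycle M A) : Bf f → M := fun p => p.x

end Cocycles

section ExtOfCocycle

variable {M : Type u} {A : Type v} [Monoid M] [AddCommMonoid A] [DistribMulAction M A]

/-- The Schreier extension `E_f : A →^{κ_f} B_f →^{σ_f} M` of the `M`-semimodule `A` by `M`
associated with a `2`-cocycle `f`. -/
def extOfCocycle (f : Cocycle M A) : SchreierExtension M A where
  B := Bf f
  κ := kappaF f
  σ := sigmaF f
  sigma_zero := rfl
  sigma_add _ _ := rfl
  kappa_inj a b h := congrArg Bf.a h
  sigma_surj x := ⟨⟨0, x⟩, rfl⟩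
  range_eq b := by
    constructor
    · intro h
      exact ⟨b.a, by cases b; cases h; rfl⟩
    · rintro ⟨a, rfl⟩
      rfl
  rep_exists x := by
    refine ⟨⟨0, x⟩, rfl, fun b hb => ⟨b.a, ?_, ?_⟩⟩
    · cases b with
      | mk a y =>
        have hx : y = x := hb
        subst hx
        show Bf.mk a y = kappaF f a + ⟨0, y⟩
        rw [show kappaF f a = ⟨a, 1⟩ from rfl, Bf.add_def]
        simp [f.2.2.1]
    · intro a' ha'
      rw [show kappaF f a' = ⟨a', 1⟩ from rfl, Bf.add_def] at ha'
      have := congrArg Bf.a ha'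
      simpa [f.2.2.1] using this.symm
  compat a b := by
    show b + kappaF f a = kappaF f (b.x • a) + b
    rw [show kappaF f a = ⟨a, 1⟩ from rfl, show kappaF f (b.x • a) = ⟨b.x • a, 1⟩ from rfl,
      Bf.add_def, Bf.add_def]
    simp [f.2.1, f.2.2.1, add_comm]

end ExtOfCocycle

section Semidirect

variable (M : Type u) (A : Type v) [Monoid M] [AddCommMonoid A] [DistribMulAction M A]

/-- The underlying set `A × M` of the semidirect product `A ⋊ M`. -/
@[ext] structure SemidirectCarrier where
  a : A
  x : M

namespace SemidirectCarrier

variable {M A}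

/-- The composition `(a₁, x) + (a₂, y) = (a₁ + x • a₂, x * y)` on `A ⋊ M`. -/
protected def add (p q : SemidirectCarrier M A) : SemidirectCarrier M A :=
  ⟨p.a + p.x • q.a, p.x * q.x⟩

instance : Zero (SemidirectCarrier M A) := ⟨⟨0, 1⟩⟩
instance : Add (SemidirectCarrier M A) := ⟨SemidirectCarrier.add⟩

instance : AddMonoid (SemidirectCarrier M A) where
  nsmul := nsmulRec
  add_assoc p q r := by
    show SemidirectCarrier.add (SemidirectCarrier.add p q) r
      = SemidirectCarrier.add p (SemidirectCarrier.add q r)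
    unfold SemidirectCarrier.add
    simp only [SemidirectCarrier.mk.injEq]
    exact ⟨by rw [smul_add, mul_smul]; abel, mul_assoc _ _ _⟩
  zero_add p := by
    show SemidirectCarrier.add ⟨0, 1⟩ p = p
    unfold SemidirectCarrier.add
    cases p with
    | mk a x => simp
  add_zero p := by
    show SemidirectCarrier.add p ⟨0, 1⟩ = p
    unfold SemidirectCarrier.add
    cases p with
    | mk a x => simp

theorem add_def (p q : SemidirectCarrier M A) : p + q = ⟨p.a + p.x • q.a, p.x * q.x⟩ := rfl

end SemidirectCarrier

/-- The semidirect product extension `0 : A →^ι A ⋊ M →^π M`, with `ι a = (a, 1)` and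
`π (a, x) = x`. -/
def semidirectExtension : SchreierExtension M A where
  B := SemidirectCarrier M A
  κ :=
    { toFun := fun a => ⟨a, 1⟩
      map_zero' := rfl
      map_add' := fun a b => by rw [SemidirectCarrier.add_def]; simp }
  σ := fun p => p.x
  sigma_zero := rfl
  sigma_add _ _ := rfl
  kappa_inj a b h := congrArg SemidirectCarrier.a h
  sigma_surj x := ⟨⟨0, x⟩, rfl⟩
  range_eq b := by
    constructor
    · intro h
      exact ⟨b.a, by cases b; cases h; rfl⟩
    · rintro ⟨a, rfl⟩
      rfl
  rep_exists x := by
    refine ⟨⟨0, x⟩, rfl, fun b hb => ⟨b.a, ?_, ?_⟩⟩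
    · cases b with
      | mk a y =>
        have hx : y = x := hb
        subst hx
        show SemidirectCarrier.mk a y = SemidirectCarrier.add ⟨a, 1⟩ ⟨0, y⟩
        unfold SemidirectCarrier.add
        simp
    · intro a' ha'
      have := congrArg SemidirectCarrier.a ha'
      simpa [SemidirectCarrier.add_def] using this.symm
  compat a b := by
    show SemidirectCarrier.add b ⟨a, 1⟩ = SemidirectCarrier.add ⟨b.x • a, 1⟩ b
    unfold SemidirectCarrier.add
    simp [add_comm]

end Semidirect

section Similarity

variable {M : Type u} {A C : Type v} [Monoid M] [AddCommMonoid A] [DistribMulAction M A]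
  [AddCommGroup C] [DistribMulAction M C]

/-- Two Schreier extensions `E₁, E₂` of the `M`-semimodule `A` by `M` are similar
(relative to the group completion `k_A : A → K(A) = C`) if there are a Schreier extension
`S` of the `M`-module `K(A)` by `M` and morphisms of extensions `(k_A, β₁, 1_M) : E₁ → S`
and `(k_A, β₂, 1_M) : E₂ → S`. -/
def SchreierSimilar (kA : A →+ C) (E₁ E₂ : SchreierExtension M A) : Prop :=
  ∃ (S : SchreierExtension M C) (β₁ : E₁.B →+ S.B) (β₂ : E₂.B →+ S.B),
    IsSchreierHom E₁ S kA β₁ ∧ IsSchreierHom E₂ S kA β₂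


section Aux

variable {M : Type u} {A C : Type v} [Monoid M] [AddCommMonoid A] [DistribMulAction M A]
  [AddCommGroup C] [DistribMulAction M C]

theorem kappaF_add {D : Type v} [AddCommMonoid D] [DistribMulAction M D]
    (h : Cocycle M D) (a : D) (u : Bf h) :
    kappaF h a + u = ⟨a + u.a, u.x⟩ := by
  rw [show kappaF h a = (⟨a, 1⟩ : Bf h) from rfl, Bf.add_def]
  simp [h.2.2.1]

/-- Push a cocycle forward along `kA`. -/
def pushCocycle (kA : A →+ C) (hk_act : ∀ (x : M) (a : A), kA (x • a) = x • kA a)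
    (f : Cocycle M A) : Cocycle M C :=
  ⟨fun x y => kA (f.1 x y), by
    obtain ⟨h1, h2, h3⟩ := f.2
    refine ⟨fun x => by simp [h1 x], fun y => by simp [h2 y], fun x y z => ?_⟩
    have := congrArg kA (h3 x y z)
    simpa [map_add, hk_act] using this⟩

theorem isRep_extOfCocycle (h : Cocycle M C) (u : Bf h) :
    (extOfCocycle h).IsRep u.x u := by
  refine ⟨rfl, fun b hb => ⟨b.a - u.a, ?_, ?_⟩⟩
  · show b = kappaF h (b.a - u.a) + u
    rw [kappaF_add, sub_add_cancel]
    exact Bf.ext rfl hb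
  · intro a' ha'
    replace ha' : b = kappaF h a' + u := ha'
    rw [kappaF_add] at ha'
    have := congrArg Bf.a ha'
    simp only at this
    rw [this]
    abel

/-- Build a morphism from a Schreier extension of `A` into the extension of a cocycle with
coefficients in `C`. -/
def betaOf (E : SchreierExtension M A) (h : Cocycle M C) (d : E.B → C)
    (hd0 : d 0 = 0)
    (hdadd : ∀ b₁ b₂ : E.B, d (b₁ + b₂) = d b₁ + E.σ b₁ • d b₂ + h.1 (E.σ b₁) (E.σ b₂)) :
    E.B →+ (extOfCocycle h).B where
  toFun b := (⟨d b, E.σ b⟩ : Bf h)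
  map_zero' := by
    show (⟨d 0, E.σ 0⟩ : Bf h) = (⟨0, 1⟩ : Bf h)
    rw [hd0, E.sigma_zero]
  map_add' b₁ b₂ := by
    show (⟨d (b₁ + b₂), E.σ (b₁ + b₂)⟩ : Bf h)
      = (⟨d b₁, E.σ b₁⟩ : Bf h) + (⟨d b₂, E.σ b₂⟩ : Bf h)
    rw [Bf.add_def, hdadd, E.sigma_add]

theorem betaOf_isHom (kA : A →+ C) (E : SchreierExtension M A) (h : Cocycle M C)
    (d : E.B → C) (hd0 : d 0 = 0)
    (hdadd : ∀ b₁ b₂ : E.B, d (b₁ + b₂) = d b₁ + E.σ b₁ • d b₂ + h.1 (E.σ b₁) (E.σ b₂))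
    (hκ : ∀ a : A, d (E.κ a) = kA a) :
    IsSchreierHom E (extOfCocycle h) kA (betaOf E h d hd0 hdadd) := by
  refine ⟨fun a => ?_, fun b => rfl, fun x u hu => ?_⟩
  · show (⟨d (E.κ a), E.σ (E.κ a)⟩ : Bf h) = kappaF h (kA a)
    have h1 : E.σ (E.κ a) = 1 := (E.range_eq (E.κ a)).mpr ⟨a, rfl⟩
    rw [hκ, h1]
    rfl
  · rw [← hu.1]
    exact isRep_extOfCocycle h _

open Classical in
/-- A globally chosen system of representatives, normalized at `1`. -/
noncomputable def repFun (E : SchreierExtension M A) : M → E.B :=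
  fun x => if x = 1 then 0 else (E.rep_exists x).choose

theorem repFun_one (E : SchreierExtension M A) : repFun E 1 = 0 := by
  unfold repFun
  simp

theorem repFun_isRep (E : SchreierExtension M A) (x : M) : E.IsRep x (repFun E x) := by
  unfold repFun
  split
  · next hx =>
    subst hx
    refine ⟨E.sigma_zero, fun b hb => ?_⟩
    obtain ⟨a, rfl⟩ := (E.range_eq b).mp hb
    exact ⟨a, (add_zero _).symm,
      fun a' ha' => E.kappa_inj (by simpa using ha'.symm)⟩
  · exact (E.rep_exists x).choose_spec

/-- The canonical `A`-component of an element w.r.t. the chosen representatives. -/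
noncomputable def decomp (E : SchreierExtension M A) (b : E.B) : A :=
  ((repFun_isRep E (E.σ b)).2 b rfl).choose

theorem decomp_spec (E : SchreierExtension M A) (b : E.B) :
    b = E.κ (decomp E b) + repFun E (E.σ b) :=
  ((repFun_isRep E (E.σ b)).2 b rfl).choose_spec.1

theorem decomp_unique (E : SchreierExtension M A) (b : E.B) (a : A)
    (h : b = E.κ a + repFun E (E.σ b)) : decomp E b = a :=
  (((repFun_isRep E (E.σ b)).2 b rfl).choose_spec.2 a h).symm

theorem decomp_repFun (E : SchreierExtension M A) (x : M) : decomp E (repFun E x) = 0 := by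
  apply decomp_unique
  rw [(repFun_isRep E x).1, map_zero, zero_add]

theorem decomp_zero (E : SchreierExtension M A) : decomp E 0 = 0 := by
  apply decomp_unique
  rw [E.sigma_zero, repFun_one, map_zero, add_zero]

theorem decomp_kappa (E : SchreierExtension M A) (a : A) : decomp E (E.κ a) = a := by
  apply decomp_unique
  rw [show E.σ (E.κ a) = 1 from (E.range_eq (E.κ a)).mpr ⟨a, rfl⟩, repFun_one, add_zero]

/-- The cocycle extracted from a Schreier extension. -/
noncomputable def cFun (E : SchreierExtension M A) : M → M → A :=
  fun x y => decomp E (repFun E x + repFun E y)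

theorem sigma_repFun_add (E : SchreierExtension M A) (x y : M) :
    E.σ (repFun E x + repFun E y) = x * y := by
  rw [E.sigma_add, (repFun_isRep E x).1, (repFun_isRep E y).1]

theorem cFun_spec (E : SchreierExtension M A) (x y : M) :
    repFun E x + repFun E y = E.κ (cFun E x y) + repFun E (x * y) := by
  have h := decomp_spec E (repFun E x + repFun E y)
  rwa [sigma_repFun_add] at h

theorem decomp_add (E : SchreierExtension M A) (b₁ b₂ : E.B) :
    decomp E (b₁ + b₂)
      = decomp E b₁ + E.σ b₁ • decomp E b₂ + cFun E (E.σ b₁) (E.σ b₂) := by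
  apply decomp_unique
  rw [E.sigma_add]
  have hc : repFun E (E.σ b₁) + E.κ (decomp E b₂)
      = E.κ (E.σ b₁ • decomp E b₂) + repFun E (E.σ b₁) := by
    have := E.compat (decomp E b₂) (repFun E (E.σ b₁))
    rwa [(repFun_isRep E (E.σ b₁)).1] at this
  calc b₁ + b₂
      = (E.κ (decomp E b₁) + repFun E (E.σ b₁)) + (E.κ (decomp E b₂) + repFun E (E.σ b₂)) := by
        rw [← decomp_spec, ← decomp_spec]
    _ = E.κ (decomp E b₁) + ((repFun E (E.σ b₁) + E.κ (decomp E b₂)) + repFun E (E.σ b₂)) := by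
        simp only [add_assoc]
    _ = E.κ (decomp E b₁) + ((E.κ (E.σ b₁ • decomp E b₂) + repFun E (E.σ b₁)) + repFun E (E.σ b₂)) := by
        rw [hc]
    _ = E.κ (decomp E b₁) + (E.κ (E.σ b₁ • decomp E b₂) + (E.κ (cFun E (E.σ b₁) (E.σ b₂)) + repFun E (E.σ b₁ * E.σ b₂))) := by
        rw [add_assoc, cFun_spec]
    _ = E.κ (decomp E b₁ + E.σ b₁ • decomp E b₂ + cFun E (E.σ b₁) (E.σ b₂)) + repFun E (E.σ b₁ * E.σ b₂) := by
        simp only [map_add, add_assoc]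

theorem cFun_cocycle (E : SchreierExtension M A) : IsCocycle M A (cFun E) := by
  have hone : ∀ x : M, cFun E x 1 = 0 := by
    intro x
    unfold cFun
    rw [repFun_one, add_zero, decomp_repFun]
  have hone' : ∀ y : M, cFun E 1 y = 0 := by
    intro y
    unfold cFun
    rw [repFun_one, zero_add, decomp_repFun]
  refine ⟨hone, hone', fun x y z => ?_⟩
  have h1 : decomp E ((repFun E x + repFun E y) + repFun E z)
      = cFun E x y + (x * y) • (0 : A) + cFun E (x * y) z := by
    rw [decomp_add, sigma_repFun_add, (repFun_isRep E z).1, decomp_repFun]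
    rfl
  have h2 : decomp E (repFun E x + (repFun E y + repFun E z))
      = (0 : A) + x • cFun E y z + cFun E x (y * z) := by
    rw [decomp_add, (repFun_isRep E x).1, sigma_repFun_add, decomp_repFun]
    rfl
  have h3 : cFun E x y + (x * y) • (0 : A) + cFun E (x * y) z
      = (0 : A) + x • cFun E y z + cFun E x (y * z) := by
    rw [← h1, ← h2, add_assoc]
  simp only [smul_zero, add_zero, zero_add] at h3
  rw [add_comm (cFun E (x * y) z) (cFun E x y)]
  exact h3.symm

/-- The cocycle of a Schreier extension. -/
noncomputable def cocycleOf (E : SchreierExtension M A) : Cocycle M A :=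
  ⟨cFun E, cFun_cocycle E⟩

theorem similar_cocycleOf (kA : A →+ C)
    (hk_act : ∀ (x : M) (a : A), kA (x • a) = x • kA a) (E : SchreierExtension M A) :
    SchreierSimilar kA E (extOfCocycle (cocycleOf E)) := by
  refine ⟨extOfCocycle (pushCocycle kA hk_act (cocycleOf E)),
    betaOf E _ (fun b => kA (decomp E b)) (by show kA (decomp E 0) = 0; rw [decomp_zero, map_zero]) ?_,
    betaOf (extOfCocycle (cocycleOf E)) _ (fun p => kA p.a) ?_ ?_,
    betaOf_isHom kA _ _ _ _ _ (fun a => by rw [decomp_kappa]),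
    betaOf_isHom kA _ _ _ _ _ (fun a => rfl)⟩
  · intro b₁ b₂
    show kA (decomp E (b₁ + b₂))
      = kA (decomp E b₁) + E.σ b₁ • kA (decomp E b₂) + kA (cFun E (E.σ b₁) (E.σ b₂))
    rw [decomp_add]
    simp [map_add, hk_act]
  · show kA (0 : A) = 0
    exact map_zero kA
  · intro p q
    show kA (p + q).a = kA p.a + p.x • kA q.a + kA (cFun E p.x q.x)
    rw [show p + q = (⟨p.a + p.x • q.a + (cocycleOf E).1 p.x q.x, p.x * q.x⟩ : Bf (cocycleOf E)) from Bf.add_def _ p q]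
    show kA (p.a + p.x • q.a + cFun E p.x q.x) = kA p.a + p.x • kA q.a + kA (cFun E p.x q.x)
    simp [map_add, hk_act]

theorem similar_of_cohomologous (kA : A →+ C)
    (hk_act : ∀ (x : M) (a : A), kA (x • a) = x • kA a) (f f' : Cocycle M A)
    (hco : Cohomologous M A f.1 f'.1) :
    SchreierSimilar kA (extOfCocycle f) (extOfCocycle f') := by
  obtain ⟨g₁, g₂, hg₁, hg₂, hrel⟩ := hco
  refine ⟨extOfCocycle (pushCocycle kA hk_act f'),
    betaOf (extOfCocycle f) _ (fun p => kA p.a + (kA (g₂ p.x) - kA (g₁ p.x))) ?_ ?_,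
    betaOf (extOfCocycle f') _ (fun p => kA p.a) ?_ ?_,
    betaOf_isHom kA _ _ _ _ _ (fun a => by show kA a + (kA (g₂ 1) - kA (g₁ 1)) = kA a; rw [hg₁, hg₂]; simp),
    betaOf_isHom kA _ _ _ _ _ (fun a => rfl)⟩
  · show kA (0 : A) + (kA (g₂ 1) - kA (g₁ 1)) = 0
    rw [hg₁, hg₂]; simp
  · intro p q
    show kA (p + q).a + (kA (g₂ ((p + q).x)) - kA (g₁ ((p + q).x)))
      = (kA p.a + (kA (g₂ p.x) - kA (g₁ p.x)))
        + p.x • (kA q.a + (kA (g₂ q.x) - kA (g₁ q.x))) + kA (f'.1 p.x q.x)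
    rw [show p + q = (⟨p.a + p.x • q.a + f.1 p.x q.x, p.x * q.x⟩ : Bf f) from Bf.add_def _ p q]
    have key := congrArg kA (hrel p.x q.x)
    simp only [map_add, hk_act] at key ⊢
    rw [smul_add, smul_sub]
    linear_combination (norm := abel) key
  · show kA (0 : A) = 0
    exact map_zero kA
  · intro p q
    show kA (p + q).a = kA p.a + p.x • kA q.a + kA (f'.1 p.x q.x)
    rw [show p + q = (⟨p.a + p.x • q.a + f'.1 p.x q.x, p.x * q.x⟩ : Bf f') from Bf.add_def _ p q]
    simp [map_add, hk_act]

theorem similar_zero_semidirect (kA : A →+ C)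
    (hk_act : ∀ (x : M) (a : A), kA (x • a) = x • kA a) :
    SchreierSimilar kA (extOfCocycle (zeroCocycle M A)) (semidirectExtension M A) := by
  refine ⟨extOfCocycle (pushCocycle kA hk_act (zeroCocycle M A)),
    betaOf (extOfCocycle (zeroCocycle M A)) _ (fun p => kA p.a) ?_ ?_,
    betaOf (semidirectExtension M A) _ (fun p => kA p.a) ?_ ?_,
    betaOf_isHom kA _ _ _ _ _ (fun a => rfl),
    betaOf_isHom kA _ _ _ _ _ (fun a => rfl)⟩
  · show kA (0 : A) = 0
    exact map_zero kA
  · intro p q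
    show kA (p + q).a = kA p.a + p.x • kA q.a + kA ((zeroCocycle M A).1 p.x q.x)
    rw [show p + q = (⟨p.a + p.x • q.a + (zeroCocycle M A).1 p.x q.x, p.x * q.x⟩ : Bf (zeroCocycle M A)) from Bf.add_def _ p q]
    show kA (p.a + p.x • q.a + 0) = kA p.a + p.x • kA q.a + kA 0
    simp [map_add, hk_act]
  · show kA (0 : A) = 0
    exact map_zero kA
  · intro p q
    show kA (p + q).a = kA p.a + p.x • kA q.a + kA ((zeroCocycle M A).1 p.x q.x)
    rw [show p + q = (⟨p.a + p.x • q.a, p.x * q.x⟩ : SemidirectCarrier M A) from SemidirectCarrier.add_def p q]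
    show kA (p.a + p.x • q.a) = kA p.a + p.x • kA q.a + kA 0
    simp [map_add, hk_act]

theorem cohomologous_cocycleOf_extOfCocycle (f : Cocycle M A) :
    Cohomologous M A f.1 (cocycleOf (extOfCocycle f)).1 := by
  set E := extOfCocycle f with hE
  have hgx : ∀ x : M, (repFun E x).x = x := fun x => (repFun_isRep E x).1
  have key : ∀ x y : M, f.1 x y + x • (repFun E y).a + (repFun E x).a
      = cFun E x y + (repFun E (x * y)).a := by
    intro x y
    have h := cFun_spec E x y
    have h2 : (repFun E x).a + (repFun E x).x • (repFun E y).a + f.1 (repFun E x).x (repFun E y).x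
        = cFun E x y + (repFun E (x * y)).a := by
      have h3 : repFun E x + repFun E y
          = (⟨(repFun E x).a + (repFun E x).x • (repFun E y).a
              + f.1 (repFun E x).x (repFun E y).x, (repFun E x).x * (repFun E y).x⟩ : Bf f) :=
        Bf.add_def f _ _
      have h4 : (E.κ (cFun E x y) + repFun E (x * y) : Bf f)
          = (⟨cFun E x y + (repFun E (x * y)).a, (repFun E (x * y)).x⟩ : Bf f) :=
        kappaF_add f _ _
      have := h3.symm.trans (h.trans h4)
      exact congrArg Bf.a this
    rw [hgx, hgx] at h2
    rw [← h2]
    abel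
  refine ⟨fun x => (repFun E x).a, fun _ => 0, ?_, rfl, fun x y => ?_⟩
  · show (repFun E 1).a = 0
    rw [repFun_one]
    rfl
  · simp only [smul_zero, add_zero, zero_add]
    exact key x y

theorem cohomologous_of_similar (kA : A →+ C)
    (hk_eq : ∀ a a' : A, kA a = kA a' ↔ ∃ z : A, a + z = a' + z)
    (hk_sur : ∀ c : C, ∃ a a' : A, c = kA a - kA a')
    (hk_act : ∀ (x : M) (a : A), kA (x • a) = x • kA a)
    (hcanc : ∀ a b c : A, a + b = a + c → b = c)
    (E E' : SchreierExtension M A) (hsim : SchreierSimilar kA E E') :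
    Cohomologous M A (cocycleOf E).1 (cocycleOf E').1 := by
  classical
  show Cohomologous M A (cFun E) (cFun E')
  obtain ⟨S, β₁, β₂, hβ₁, hβ₂⟩ := hsim
  have hrep : ∀ x : M, S.IsRep x (β₁ (repFun E x)) :=
    fun x => hβ₁.2.2 x (repFun E x) (repFun_isRep E x)
  have hσ' : ∀ x : M, S.σ (β₂ (repFun E' x)) = x := fun x => by
    rw [hβ₂.2.1]; exact (repFun_isRep E' x).1
  have hex : ∀ x : M, ∃! c : C, β₂ (repFun E' x) = S.κ c + β₁ (repFun E x) :=
    fun x => (hrep x).2 _ (hσ' x)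
  choose h hspec using hex
  have h1 : h 1 = 0 := by
    refine ((hspec 1).2 0 ?_).symm
    show β₂ (repFun E' 1) = S.κ 0 + β₁ (repFun E 1)
    rw [repFun_one, repFun_one, map_zero, map_zero, map_zero, zero_add]
  have cEq : ∀ x y : M, h x + x • h y + kA (cFun E x y) = kA (cFun E' x y) + h (x * y) := by
    intro x y
    have e1 : β₁ (repFun E x) + β₁ (repFun E y)
        = S.κ (kA (cFun E x y)) + β₁ (repFun E (x * y)) := by
      have := congrArg β₁ (cFun_spec E x y)
      rwa [map_add, map_add, hβ₁.1] at this
    have e2 : β₂ (repFun E' x) + β₂ (repFun E' y)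
        = S.κ (kA (cFun E' x y)) + β₂ (repFun E' (x * y)) := by
      have := congrArg β₂ (cFun_spec E' x y)
      rwa [map_add, map_add, hβ₂.1] at this
    have hb : S.σ (β₂ (repFun E' x) + β₂ (repFun E' y)) = x * y := by
      rw [S.sigma_add, hσ', hσ']
    obtain ⟨c, _, hcu⟩ := (hrep (x * y)).2 _ hb
    have d1 : β₂ (repFun E' x) + β₂ (repFun E' y)
        = S.κ (h x + x • h y + kA (cFun E x y)) + β₁ (repFun E (x * y)) := by
      calc β₂ (repFun E' x) + β₂ (repFun E' y)
          = (S.κ (h x) + β₁ (repFun E x)) + (S.κ (h y) + β₁ (repFun E y)) := by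
            rw [← (hspec x).1, ← (hspec y).1]
        _ = S.κ (h x) + ((β₁ (repFun E x) + S.κ (h y)) + β₁ (repFun E y)) := by
            simp only [add_assoc]
        _ = S.κ (h x) + ((S.κ (S.σ (β₁ (repFun E x)) • h y) + β₁ (repFun E x)) + β₁ (repFun E y)) := by
            rw [S.compat]
        _ = S.κ (h x) + (S.κ (x • h y) + (β₁ (repFun E x) + β₁ (repFun E y))) := by
            rw [(hrep x).1, add_assoc]
        _ = S.κ (h x) + (S.κ (x • h y) + (S.κ (kA (cFun E x y)) + β₁ (repFun E (x * y)))) := by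
            rw [e1]
        _ = S.κ (h x + x • h y + kA (cFun E x y)) + β₁ (repFun E (x * y)) := by
            simp only [map_add, add_assoc]
    have d2 : β₂ (repFun E' x) + β₂ (repFun E' y)
        = S.κ (kA (cFun E' x y) + h (x * y)) + β₁ (repFun E (x * y)) := by
      rw [e2, (hspec (x * y)).1, map_add, add_assoc]
    exact (hcu _ d1).trans (hcu _ d2).symm
  choose p q hpq using fun x => hk_sur (h x)
  have hpq' : ∀ x : M, h x = kA (if x = 1 then 0 else p x) - kA (if x = 1 then 0 else q x) := by
    intro x
    by_cases hx : x = 1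
    · subst hx; simp [h1]
    · simp only [hx, if_false]; exact hpq x
  refine ⟨fun x => if x = 1 then 0 else p x, fun x => if x = 1 then 0 else q x,
    if_pos rfl, if_pos rfl, fun x y => ?_⟩
  have hC : kA (cFun E x y + x • (if y = 1 then 0 else p y)
        + (if x = 1 then 0 else p x) + (if x * y = 1 then 0 else q (x * y)))
      = kA (cFun E' x y + x • (if y = 1 then 0 else q y)
        + (if x = 1 then 0 else q x) + (if x * y = 1 then 0 else p (x * y))) := by
    have hc := cEq x y
    rw [hpq' x, hpq' y, hpq' (x * y)] at hc
    simp only [map_add, hk_act, smul_sub] at hc ⊢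
    linear_combination (norm := abel) hc
  obtain ⟨z, hz⟩ := (hk_eq _ _).mp hC
  refine hcanc z _ _ ?_
  rw [add_comm z, add_comm z]
  exact hz

end Aux

/-- Let `M` be a monoid and `A` an `M`-semimodule, with group completion
`k_A : A → K(A) = C`.  The map `θ(M,A) : H²(M,A) → E(M,A)` from the set of cohomology
classes of `2`-cocycles to the set of similarity classes of Schreier extensions of `A` by
`M`, sending the class of a `2`-cocycle `f` to the class of the extension `E_f`, is a
well-defined surjective map of pointed sets (the class of the zero cocycle goes to the
class of the semidirect product extension).  If moreover `A` is cancellative, then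
`θ(M,A)` is a bijection. -/
theorem theta_surjective_bijective (kA : A →+ C)
    (hk_eq : ∀ a a' : A, kA a = kA a' ↔ ∃ z : A, a + z = a' + z)
    (hk_sur : ∀ c : C, ∃ a a' : A, c = kA a - kA a')
    (hk_act : ∀ (x : M) (a : A), kA (x • a) = x • kA a) :
    ∃ θ : Quot (fun F F' : Cocycle M A => Cohomologous M A F.1 F'.1)
        → Quot (SchreierSimilar (M := M) kA),
      (∀ F : Cocycle M A, θ (Quot.mk _ F) = Quot.mk _ (extOfCocycle F)) ∧
      Function.Surjective θ ∧
      θ (Quot.mk _ (zeroCocycle M A)) = Quot.mk _ (semidirectExtension M A) ∧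
      ((∀ a b c : A, a + b = a + c → b = c) → Function.Bijective θ) := by
  classical
  have wd : ∀ F F' : Cocycle M A, Cohomologous M A F.1 F'.1 →
      Quot.mk (SchreierSimilar (M := M) kA) (extOfCocycle F)
        = Quot.mk (SchreierSimilar (M := M) kA) (extOfCocycle F') :=
    fun F F' hco => Quot.sound (similar_of_cohomologous kA hk_act F F' hco)
  refine ⟨Quot.lift (fun F => Quot.mk _ (extOfCocycle F)) wd, fun F => rfl, ?_, ?_, ?_⟩
  · intro qE
    induction qE using Quot.ind with
    | _ E =>
      exact ⟨Quot.mk _ (cocycleOf E), (Quot.sound (similar_cocycleOf kA hk_act E)).symm⟩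
  · exact Quot.sound (similar_zero_semidirect kA hk_act)
  · intro hcanc
    refine ⟨?_, ?_⟩
    · set ψ : Quot (SchreierSimilar (M := M) kA)
          → Quot (fun F F' : Cocycle M A => Cohomologous M A F.1 F'.1) :=
        Quot.lift (fun E => Quot.mk _ (cocycleOf E))
          (fun E E' hEE' => Quot.sound
            (cohomologous_of_similar kA hk_eq hk_sur hk_act hcanc E E' hEE')) with hψ
      have hψθ : ∀ qF, ψ (Quot.lift (fun F => Quot.mk _ (extOfCocycle F)) wd qF) = qF := by
        intro qF
        induction qF using Quot.ind with
        | _ F => exact (Quot.sound (r := fun F F' : Cocycle M A => Cohomologous M A F.1 F'.1)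
            (cohomologous_cocycleOf_extOfCocycle F)).symm
      intro q q' hqq'
      rw [← hψθ q, ← hψθ q', hqq']
    · intro qE
      induction qE using Quot.ind with
      | _ E =>
        exact ⟨Quot.mk _ (cocycleOf E), (Quot.sound (similar_cocycleOf kA hk_act E)).symm⟩


end Similarity
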